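/- Every tree T with maximum degree Δ(T) ≥ 5 admits a locally irregular 2-edge coloring, i.e., χ'_irr(T) ≤ 2. -/

import Mathlib

open SimpleGraph

variable {V : Type*}

noncomputable def colorDeg (G : SimpleGraph V) (c : Sym2 V → ℕ) (i : ℕ) (x : V) : ℕ :=
  {y | G.Adj x y ∧ c s(x, y) = i}.ncard

def IsLocIrrColoring (G : SimpleGraph V) (c : Sym2 V → ℕ) : Prop :=
  ∀ x y, G.Adj x y → colorDeg G c (c s(x, y)) x ≠ colorDeg G c (c s(x, y)) y

def IsLIEC (G : SimpleGraph V) (k : ℕ) (c : Sym2 V → ℕ) : Prop :=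
  (∀ e ∈ G.edgeSet, c e < k) ∧ IsLocIrrColoring G c

def IrrColorable (G : SimpleGraph V) : Prop := ∃ k c, IsLIEC G k c

noncomputable def irrChromIndex (G : SimpleGraph V) : ℕ :=
  sInf {k | ∃ c, IsLIEC G k c}

def IsCactus (G : SimpleGraph V) : Prop :=
  ∀ ⦃a b : V⦄ (p : G.Walk a a) (q : G.Walk b b), p.IsCycle → q.IsCycle →
    (∃ e, e ∈ p.edges ∧ e ∈ q.edges) → ∀ e, e ∈ p.edges ↔ e ∈ q.edges

noncomputable def numCycles (G : SimpleGraph V) : ℕ :=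
  {s : Set (Sym2 V) | ∃ (w : V) (p : G.Walk w w), p.IsCycle ∧ {e | e ∈ p.edges} = s}.ncard


section Counting
open Finset

lemma exists_good_t (k ε : ℕ) (hε : ε ≤ 1) (h5 : ε = 1 ∨ 5 ≤ k) (cnt : ℕ → ℕ)
    (hcnt : ∀ P : Finset ℕ, (∑ m ∈ P, cnt m) ≤ k) :
    ∃ t, t ≤ k ∧ cnt t ≤ k - t ∧ cnt (k + ε - t) ≤ t ∧ (2*t = k + ε → cnt t = 0) := by
  by_contra hcon
  push_neg at hcon
  set P := (k + ε) / 2 with hP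
  have hPk : P ≤ k := by omega
  have key : ∀ p, ∃ m, p ≤ P → ((m = p ∨ m = k + ε - p) ∧
      cnt m ≥ (if 2*p = k + ε then 1 else p + 1)) := by
    intro p
    by_cases hp : p ≤ P
    swap
    · exact ⟨0, fun h => absurd h hp⟩
    have hpk : p ≤ k := le_trans hp hPk
    by_cases h1 : cnt p ≤ k - p
    · by_cases h2 : cnt (k + ε - p) ≤ p
      · obtain ⟨hmid, hne⟩ := hcon p hpk h1 h2
        exact ⟨p, fun _ => ⟨Or.inl rfl, by simp [hmid]; omega⟩⟩
      · refine ⟨k + ε - p, fun _ => ⟨Or.inr rfl, ?_⟩⟩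
        split <;> omega
    · refine ⟨p, fun _ => ⟨Or.inl rfl, ?_⟩⟩
      have : 2 * p ≤ k + ε := by omega
      split <;> omega
  choose mf hmf using key
  have hmem : ∀ p ∈ range (P+1), p ≤ P := fun p hp => by
    simpa using Nat.lt_succ_iff.mp (mem_range.mp hp)
  -- injectivity on range (P+1)
  have hinj : Set.InjOn mf (range (P+1)) := by
    intro p hp q hq heq
    obtain ⟨h1, _⟩ := hmf p (hmem p hp)
    obtain ⟨h2, _⟩ := hmf q (hmem q hq)
    rcases h1 with h | h <;> rcases h2 with h' | h' <;>
      · have := hmem p hp; have := hmem q hq; omega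
  have hsum : (∑ p ∈ range (P+1), cnt (mf p)) ≤ k := by
    rw [← Finset.sum_image (fun p hp q hq h => hinj hp hq h)]
    exact hcnt _
  have hlow : (∑ p ∈ range (P+1), (if 2*p = k + ε then 1 else p + 1)) ≤
      (∑ p ∈ range (P+1), cnt (mf p)) :=
    Finset.sum_le_sum (fun p hp => (hmf p (hmem p hp)).2)
  -- arithmetic contradiction
  set S1 := ∑ p ∈ range P, p with hS1
  have hsplit : (∑ p ∈ range (P+1), (if 2*p = k + ε then 1 else p + 1))
      = (∑ p ∈ range P, (p+1)) + (if 2*P = k + ε then 1 else P + 1) := by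
    rw [Finset.sum_range_succ]
    congr 1
    refine Finset.sum_congr rfl (fun p hp => ?_)
    have hpP : p < P := mem_range.mp hp
    have : ¬ (2*p = k + ε) := by omega
    simp [this]
  have hsum2 : (∑ p ∈ range P, (p+1)) = S1 + P := by
    rw [Finset.sum_add_distrib]
    simp [hS1]
  have hb1 : P ≥ 1 → S1 ≥ P - 1 := by
    intro h
    exact Finset.single_le_sum (f := fun p => p) (fun i _ => Nat.zero_le i)
      (mem_range.mpr (by omega))
  have hb2 : P ≥ 2 → S1 ≥ 2*P - 3 := by
    intro h
    have hsub : ({P-1, P-2} : Finset ℕ) ⊆ range P := by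
      intro x hx
      simp only [Finset.mem_insert, Finset.mem_singleton] at hx
      rcases hx with rfl | rfl <;> exact mem_range.mpr (by omega)
    have h2 := Finset.sum_le_sum_of_subset (f := fun p => p) hsub
    rw [Finset.sum_pair (by omega : P - 1 ≠ P - 2)] at h2
    have h3 : P - 1 + (P - 2) ≤ S1 := by simpa using h2
    omega
  have hfin : S1 + P + (if 2*P = k + ε then 1 else P + 1) ≤ k := by
    calc S1 + P + (if 2*P = k + ε then 1 else P + 1)
        = (∑ p ∈ range (P+1), (if 2*p = k + ε then 1 else p + 1)) := by
          rw [hsplit, hsum2]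
      _ ≤ (∑ p ∈ range (P+1), cnt (mf p)) := hlow
      _ ≤ k := hsum
  by_cases hmid : 2*P = k + ε
  · rw [if_pos hmid] at hfin
    rcases h5 with rfl | h5
    · have := hb1 (by omega)
      omega
    · have := hb2 (by omega)
      omega
  · rw [if_neg hmid] at hfin
    have h2P : k + ε = 2*P + 1 := by omega
    rcases h5 with rfl | h5
    · omega
    · have := hb1 (by omega)
      omega

lemma counting_core {ι : Type*} [DecidableEq ι] (J : Finset ι) (s : ι → ℕ) (ε : ℕ)
    (hε : ε ≤ 1) (h5 : ε = 1 ∨ 5 ≤ J.card) :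
    ∃ B ⊆ J, (∀ j ∈ B, s j ≠ B.card) ∧ ∀ j ∈ J \ B, s j ≠ J.card + ε - B.card := by
  classical
  set k := J.card with hk
  have hcnt : ∀ P : Finset ℕ, (∑ m ∈ P, (J.filter (fun j => s j = m)).card) ≤ k := by
    intro P
    have hdisj : (P : Set ℕ).PairwiseDisjoint (fun m => J.filter (fun j => s j = m)) := by
      intro a _ b _ hab
      simp only [Finset.disjoint_left, Finset.mem_filter]
      rintro x ⟨_, h1⟩ ⟨_, h2⟩
      exact hab (h1 ▸ h2 ▸ rfl)
    rw [← Finset.card_biUnion (fun a ha b hb hab => hdisj ha hb hab)]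
    apply Finset.card_le_card
    intro x hx
    simp only [Finset.mem_biUnion, Finset.mem_filter] at hx
    obtain ⟨m, _, hxJ, _⟩ := hx
    exact hxJ
  obtain ⟨t, htk, h1, h2, h3⟩ := exists_good_t k ε hε h5 _ hcnt
  set X := J.filter (fun j => s j = k + ε - t) with hX
  set Y := J.filter (fun j => s j ≠ t) with hY
  have hXY : X ⊆ Y := by
    intro j hj
    simp only [hX, hY, Finset.mem_filter] at hj ⊢
    refine ⟨hj.1, ?_⟩
    intro hst
    by_cases hmid : k + ε - t = t
    · have h2t : 2*t = k + ε := by omega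
      have hz := h3 h2t
      have hmem : j ∈ J.filter (fun j => s j = t) := by
        simp only [Finset.mem_filter]
        exact ⟨hj.1, hst⟩
      rw [Finset.card_eq_zero] at hz
      rw [hz] at hmem
      exact absurd hmem (Finset.notMem_empty j)
    · exact hmid (by omega)
  have hYcard : t ≤ Y.card := by
    have hsplit := Finset.card_filter_add_card_filter_not (s := J) (p := fun j => s j = t)
    have hYc : Y.card = (J.filter (fun j => ¬ s j = t)).card := rfl
    omega
  have hXcard : X.card ≤ t := h2
  obtain ⟨B, hXB, hBY, hBcard⟩ := Finset.exists_subsuperset_card_eq hXY (by omega) (by omega : t ≤ Y.card)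
  have hBt : B.card = t := by omega
  refine ⟨B, le_trans hBY (Finset.filter_subset _ _), ?_, ?_⟩
  · intro j hj
    have := hBY hj
    simp only [hY, Finset.mem_filter] at this
    rw [hBt]
    exact this.2
  · intro j hj
    rw [hBt]
    simp only [Finset.mem_sdiff] at hj
    intro hst
    apply hj.2
    apply hXB
    simp [hX, Finset.mem_filter, hj.1, hst]

end Counting


section Ground

variable [Fintype V] [DecidableEq V] (T : SimpleGraph V) (hT : T.IsTree) (v : V)
include hT
set_option linter.unusedSectionVars false

lemma exists_shortest_path (x : V) : ∃ p : T.Walk x v, p.IsPath ∧ p.length = T.dist x v := by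
  obtain ⟨q, hq⟩ := hT.isConnected.exists_walk_length_eq_dist x v
  refine ⟨q.bypass, q.bypass_isPath, le_antisymm ?_ (SimpleGraph.dist_le _)⟩
  exact hq ▸ q.length_bypass_le

lemma support_dist_lt {x : V} {p : T.Walk x v} (hp : p.length = T.dist x v)
    {z : V} (hz : z ∈ p.support) (hzx : z ≠ x) : T.dist z v < T.dist x v := by
  have hsplit := congr_arg SimpleGraph.Walk.length (p.take_spec hz)
  rw [SimpleGraph.Walk.length_append] at hsplit
  have h1 : T.dist z v ≤ (p.dropUntil z hz).length := SimpleGraph.dist_le _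
  have h2 : (p.takeUntil z hz).length ≠ 0 := by
    intro h0
    exact hzx (SimpleGraph.Walk.eq_of_length_eq_zero h0).symm
  omega

lemma adj_dist_ne (hadj : T.Adj x y) : T.dist x v ≠ T.dist y v := by
  intro heq
  obtain ⟨p, hp, hpl⟩ := exists_shortest_path T hT v x
  have hy : y ∉ p.support := by
    intro hy
    rcases eq_or_ne y x with rfl | hne
    · exact T.irrefl hadj
    · have := support_dist_lt T hT v hpl hy hne
      omega
  have hpath : (p.cons hadj.symm).IsPath := hp.cons hy
  obtain ⟨q, hq, hql⟩ := exists_shortest_path T hT v y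
  have huniq := hT.existsUnique_path y v
  have := (huniq.unique hpath hq)
  have hlen := congr_arg SimpleGraph.Walk.length this
  rw [SimpleGraph.Walk.length_cons] at hlen
  omega

lemma exists_parent (x : V) (hx : x ≠ v) :
    ∃ y, T.Adj x y ∧ T.dist y v + 1 = T.dist x v := by
  have hd : 0 < T.dist x v := hT.isConnected.pos_dist_of_ne hx
  obtain ⟨p, hp, hpl⟩ := exists_shortest_path T hT v x
  cases p with
  | nil => simp at hd
  | @cons _ y _ ha q =>
    refine ⟨y, ha, ?_⟩
    rw [SimpleGraph.Walk.length_cons] at hpl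
    have h1 : T.dist y v ≤ q.length := SimpleGraph.dist_le _
    have h2 : T.dist x v ≤ T.dist x y + T.dist y v := hT.isConnected.dist_triangle
    have h3 : T.dist x y = 1 := SimpleGraph.dist_eq_one_iff_adj.mpr ha
    omega

lemma adj_closer_unique {x y y' : V} (hxy : T.Adj x y) (hxy' : T.Adj x y')
    (hd : T.dist y v + 1 = T.dist x v) (hd' : T.dist y' v + 1 = T.dist x v) : y = y' := by
  obtain ⟨q, hq, hql⟩ := exists_shortest_path T hT v y
  obtain ⟨q', hq', hql'⟩ := exists_shortest_path T hT v y'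
  have hx1 : x ∉ q.support := by
    intro hx
    rcases eq_or_ne x y with rfl | hne
    · exact T.irrefl hxy
    · have := support_dist_lt T hT v hql hx hne
      omega
  have hx2 : x ∉ q'.support := by
    intro hx
    rcases eq_or_ne x y' with rfl | hne
    · exact T.irrefl hxy'
    · have := support_dist_lt T hT v hql' hx hne
      omega
  have hp1 : (q.cons hxy).IsPath := hq.cons hx1
  have hp2 : (q'.cons hxy').IsPath := hq'.cons hx2
  have huniq := hT.existsUnique_path x v
  have heq := (huniq.unique hp1 hp2)
  have := congr_arg SimpleGraph.Walk.support heq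
  rw [SimpleGraph.Walk.support_cons, SimpleGraph.Walk.support_cons,
    q.support_eq_cons, q'.support_eq_cons] at this
  have h2 : (x :: y :: q.support.tail)[1]? = (x :: y' :: q'.support.tail)[1]? := by
    rw [this]
  simpa using h2

noncomputable def par (x : V) : V :=
  if hx : x = v then v else (exists_parent T hT v x hx).choose

lemma par_v : par T hT v v = v := by simp [par]

lemma par_adj {x : V} (hx : x ≠ v) : T.Adj x (par T hT v x) := by
  rw [par, dif_neg hx]
  exact (exists_parent T hT v x hx).choose_spec.1

lemma par_dist {x : V} (hx : x ≠ v) :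
    T.dist (par T hT v x) v + 1 = T.dist x v := by
  rw [par, dif_neg hx]
  exact (exists_parent T hT v x hx).choose_spec.2

lemma dist_pos_of_ne {x : V} (hx : x ≠ v) : 0 < T.dist x v :=
  hT.isConnected.pos_dist_of_ne hx

lemma ne_v_of_dist_pos {x : V} (hx : 0 < T.dist x v) : x ≠ v := by
  rintro rfl
  simp [SimpleGraph.dist_self] at hx

lemma edge_form {x y : V} (hadj : T.Adj x y) :
    (x ≠ v ∧ par T hT v x = y) ∨ (y ≠ v ∧ par T hT v y = x) := by
  have hne := adj_dist_ne T hT v hadj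
  have h1 : T.dist x v ≤ T.dist x y + T.dist y v := hT.isConnected.dist_triangle
  have h2 : T.dist y v ≤ T.dist y x + T.dist x v := hT.isConnected.dist_triangle
  have h3 : T.dist x y = 1 := SimpleGraph.dist_eq_one_iff_adj.mpr hadj
  have h4 : T.dist y x = 1 := SimpleGraph.dist_eq_one_iff_adj.mpr hadj.symm
  rcases lt_or_gt_of_ne hne with hlt | hgt
  · right
    have hyv : y ≠ v := ne_v_of_dist_pos T hT v (by omega)
    refine ⟨hyv, adj_closer_unique T hT v (par_adj T hT v hyv) hadj.symm (par_dist T hT v hyv) (by omega)⟩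
  · left
    have hxv : x ≠ v := ne_v_of_dist_pos T hT v (by omega)
    refine ⟨hxv, adj_closer_unique T hT v (par_adj T hT v hxv) hadj (par_dist T hT v hxv) (by omega)⟩

/-- the subtree rooted at x (containing x) -/
def sub (x : V) : Set V :=
  {y | ∃ n, (par T hT v)^[n] y = x ∧ T.dist y v = T.dist x v + n}

lemma mem_sub_self (x : V) : x ∈ sub T hT v x := ⟨0, rfl, by simp⟩

lemma sub_child {x y z : V} (hy : y ∈ sub T hT v x) (hz : z ≠ v)
    (hpz : par T hT v z = y) : z ∈ sub T hT v x := by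
  obtain ⟨n, h1, h2⟩ := hy
  refine ⟨n + 1, ?_, ?_⟩
  · rw [Function.iterate_succ_apply, hpz, h1]
  · have := par_dist T hT v hz
    rw [hpz] at this
    omega

lemma v_not_mem_sub {x : V} (hx : x ≠ v) : v ∉ sub T hT v x := by
  rintro ⟨n, h1, h2⟩
  rw [SimpleGraph.dist_self] at h2
  have := dist_pos_of_ne T hT v hx
  omega

lemma sub_dist_ge {x y : V} (hy : y ∈ sub T hT v x) : T.dist x v ≤ T.dist y v := by
  obtain ⟨n, _, h2⟩ := hy
  omega

lemma parent_mem_sub {x y : V} (hy : y ∈ sub T hT v x) (hyx : y ≠ x) (hyv : y ≠ v) :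
    par T hT v y ∈ sub T hT v x := by
  obtain ⟨n, h1, h2⟩ := hy
  cases n with
  | zero => exact absurd h1 hyx
  | succ m =>
    refine ⟨m, ?_, ?_⟩
    · rw [Function.iterate_succ_apply] at h1
      exact h1
    · have := par_dist T hT v hyv
      omega

/-- every element of sub x other than x lies in the subtree of a child of x -/
lemma sub_step {x y : V} (hy : y ∈ sub T hT v x) (hyx : y ≠ x) :
    ∃ j, j ≠ v ∧ par T hT v j = x ∧ y ∈ sub T hT v j := by
  obtain ⟨n, h1, h2⟩ := hy
  cases n with
  | zero => exact absurd h1 hyx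
  | succ m =>
    set j := (par T hT v)^[m] y with hj
    have hpj : par T hT v j = x := by
      rw [hj]
      rw [← Function.iterate_succ_apply' (par T hT v) m y]
      exact h1
    -- dist decreases by at most one along iterates
    have hstep : ∀ l, T.dist y v ≤ T.dist ((par T hT v)^[l] y) v + l := by
      intro l
      induction l with
      | zero => simp
      | succ i ih =>
        rw [Function.iterate_succ_apply']
        by_cases hv : (par T hT v)^[i] y = v
        · rw [hv, par_v]
          rw [hv] at ih
          omega
        · have := par_dist T hT v hv
          omega
    have hjd : T.dist y v ≤ T.dist j v + m := hstep m
    have hjv : j ≠ v := by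
      apply ne_v_of_dist_pos T hT v
      omega
    have hjd2 : T.dist j v = T.dist x v + 1 := by
      have := par_dist T hT v hjv
      rw [hpj] at this
      omega
    exact ⟨j, hjv, hpj, ⟨m, rfl, by omega⟩⟩

lemma sub_disjoint {u j j' : V} (hj : par T hT v j = u) (hj' : par T hT v j' = u)
    (hjv : j ≠ v) (hjv' : j' ≠ v) {y : V} (h1 : y ∈ sub T hT v j)
    (h2 : y ∈ sub T hT v j') : j = j' := by
  have d1 := par_dist T hT v hjv
  have d2 := par_dist T hT v hjv'
  rw [hj] at d1; rw [hj'] at d2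
  obtain ⟨n, e1, f1⟩ := h1
  obtain ⟨m, e2, f2⟩ := h2
  have : n = m := by omega
  subst this
  rw [← e1, ← e2]

lemma not_mem_sub_of_dist_lt {x y : V} (h : T.dist y v < T.dist x v) :
    y ∉ sub T hT v x := fun hy => by have := sub_dist_ge T hT v hy; omega

/-- the edges of the subtree rooted at x, including the pendant edge to the parent of x -/
def subE (x : V) : Set (Sym2 V) :=
  {e | ∃ y ∈ sub T hT v x, e = s(y, par T hT v y)}

lemma edge_rep_unique {y y' : V} (hy : y ≠ v) (hy' : y' ≠ v)
    (h : s(y, par T hT v y) = s(y', par T hT v y')) : y = y' := by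
  have d1 := par_dist T hT v hy
  have d2 := par_dist T hT v hy'
  rw [Sym2.eq_iff] at h
  rcases h with ⟨rfl, _⟩ | ⟨h1, h2⟩
  · rfl
  · exfalso
    rw [← h1] at d2
    rw [h2] at d1
    omega

lemma incident_mem_subE {x y z : V} (hx : x ≠ v) (hy : y ∈ sub T hT v x)
    (hadj : T.Adj y z) : s(y, z) ∈ subE T hT v x := by
  rcases edge_form T hT v hadj with ⟨_, hp⟩ | ⟨hzv, hp⟩
  · exact ⟨y, hy, by rw [hp]⟩
  · refine ⟨z, sub_child T hT v hy hzv hp, ?_⟩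
    rw [hp, Sym2.eq_swap]

omit hT in
lemma colorDeg_eq_card [DecidableRel T.Adj] (c : Sym2 V → ℕ) (i : ℕ) (x : V) :
    colorDeg T c i x
      = ((T.neighborFinset x).filter (fun y => c s(x,y) = i)).card := by
  classical
  rw [colorDeg, ← Set.ncard_coe_finset]
  congr 1
  ext y
  simp [SimpleGraph.mem_neighborFinset]

omit hT in
lemma colorDeg_congr {c c' : Sym2 V → ℕ} {x : V}
    (h : ∀ z, T.Adj x z → c s(x,z) = c' s(x,z)) (i : ℕ) :
    colorDeg T c i x = colorDeg T c' i x := by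
  rw [colorDeg, colorDeg]
  congr 1
  ext y
  exact ⟨fun ⟨ha, hc⟩ => ⟨ha, by rw [← h y ha]; exact hc⟩,
    fun ⟨ha, hc⟩ => ⟨ha, by rw [h y ha]; exact hc⟩⟩

/-- the swap of a coloring -/
def sw (c : Sym2 V → ℕ) : Sym2 V → ℕ :=
  fun e => if c e = 0 then 1 else if c e = 1 then 0 else c e

omit hT in
lemma sw_le {c : Sym2 V → ℕ} {e : Sym2 V} : sw c e ≤ 1 ↔ c e ≤ 1 := by
  unfold sw
  split_ifs <;> omega

omit hT in
lemma sw_eq_of_not_le {c : Sym2 V → ℕ} {e : Sym2 V} (h : ¬ c e ≤ 1) : sw c e = c e := by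
  unfold sw
  split_ifs <;> omega

omit hT in
lemma colorDeg_sw0 (c : Sym2 V → ℕ) (x : V) :
    colorDeg T (sw c) 0 x = colorDeg T c 1 x := by
  rw [colorDeg, colorDeg]
  congr 1
  ext y
  simp only [Set.mem_setOf_eq, and_congr_right_iff]
  intro _
  unfold sw
  split_ifs <;> simp_all

omit hT in
lemma colorDeg_sw1 (c : Sym2 V → ℕ) (x : V) :
    colorDeg T (sw c) 1 x = colorDeg T c 0 x := by
  rw [colorDeg, colorDeg]
  congr 1
  ext y
  simp only [Set.mem_setOf_eq, and_congr_right_iff]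
  intro _
  unfold sw
  split_ifs <;> simp_all

/-- children of a vertex -/
noncomputable def children (x : V) : Finset V := by
  classical
  exact Finset.univ.filter (fun j => j ≠ v ∧ par T hT v j = x)

lemma mem_children {x j : V} : j ∈ children T hT v x ↔ (j ≠ v ∧ par T hT v j = x) := by
  classical
  simp only [children]
  rw [Finset.mem_filter]
  simp

lemma adj_of_children {x j : V} (hj : j ∈ children T hT v x) : T.Adj x j := by
  rw [mem_children] at hj
  have := par_adj T hT v hj.1
  rw [hj.2] at this
  exact this.symm

lemma children_mem_sub {x j : V} (hj : j ∈ children T hT v x) : j ∈ sub T hT v j :=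
  mem_sub_self T hT v j

lemma par_not_mem_children {x : V} (hx : x ≠ v) : par T hT v x ∉ children T hT v x := by
  rw [mem_children]
  rintro ⟨h1, h2⟩
  have d1 := par_dist T hT v hx
  have d2 := par_dist T hT v h1
  rw [h2] at d2
  omega

lemma neighborFinset_eq [DecidableRel T.Adj] {x : V} (hx : x ≠ v) :
    T.neighborFinset x = insert (par T hT v x) (children T hT v x) := by
  ext z
  rw [SimpleGraph.mem_neighborFinset, Finset.mem_insert, mem_children]
  constructor
  · intro hadj
    rcases edge_form T hT v hadj with ⟨_, hp⟩ | ⟨hzv, hp⟩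
    · exact Or.inl hp.symm
    · exact Or.inr ⟨hzv, hp⟩
  · rintro (rfl | ⟨hzv, hp⟩)
    · exact par_adj T hT v hx
    · rw [← hp]
      exact (par_adj T hT v hzv).symm

lemma neighborFinset_root_eq [DecidableRel T.Adj] :
    T.neighborFinset v = children T hT v v := by
  ext z
  rw [SimpleGraph.mem_neighborFinset, mem_children]
  constructor
  · intro hadj
    rcases edge_form T hT v hadj with ⟨hvv, _⟩ | ⟨hzv, hp⟩
    · exact absurd rfl hvv
    · exact ⟨hzv, hp⟩
  · rintro ⟨hzv, hp⟩
    rw [← hp]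
    exact (par_adj T hT v hzv).symm

/-- a valid shrub coloring with pendant color `i` and root `i`-degree `d` -/
def Good (i : ℕ) (x : V) (d : ℕ) (c : Sym2 V → ℕ) : Prop :=
  (∀ e ∈ subE T hT v x, c e ≤ 1) ∧
  (∀ e, e ∉ subE T hT v x → c e = 2) ∧
  c s(x, par T hT v x) = i ∧
  colorDeg T c i x = d ∧
  ∀ y z, T.Adj y z → c s(y,z) ≤ 1 → s(y,z) ≠ s(x, par T hT v x) →
    colorDeg T c (c s(y,z)) y ≠ colorDeg T c (c s(y,z)) z

lemma Good.swap {x : V} {d : ℕ} {c : Sym2 V → ℕ} (h : Good T hT v 1 x d c) :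
    Good T hT v 0 x d (sw c) := by
  obtain ⟨h1, h2, h3, h4, h5⟩ := h
  refine ⟨?_, ?_, ?_, ?_, ?_⟩
  · intro e he
    rw [sw_le]
    exact h1 e he
  · intro e he
    have := h2 e he
    unfold sw
    rw [this]
    simp
  · unfold sw
    rw [h3]
    simp
  · rw [colorDeg_sw0]
    exact h4
  · intro y z hadj hle hne
    have hcle : c s(y,z) ≤ 1 := sw_le.mp hle
    have := h5 y z hadj hcle hne
    rcases Nat.le_one_iff_eq_zero_or_eq_one.mp hcle with h0 | h0
    · have hsw : sw c s(y,z) = 1 := by unfold sw; rw [h0]; rfl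
      rw [hsw, colorDeg_sw1, colorDeg_sw1, ← h0]
      exact this
    · have hsw : sw c s(y,z) = 0 := by unfold sw; rw [h0]; simp
      rw [hsw, colorDeg_sw0, colorDeg_sw0, ← h0]
      exact this

lemma sub_mono {x j : V} (hj : j ∈ children T hT v x) :
    sub T hT v j ⊆ sub T hT v x := by
  rw [mem_children] at hj
  intro y hy
  obtain ⟨n, h1, h2⟩ := hy
  have hd := par_dist T hT v hj.1
  rw [hj.2] at hd
  refine ⟨n + 1, ?_, by omega⟩
  rw [Function.iterate_succ_apply', h1, hj.2]

lemma subE_subset {x j : V} (hj : j ∈ children T hT v x) :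
    subE T hT v j ⊆ subE T hT v x := by
  rintro e ⟨y, hy, rfl⟩
  exact ⟨y, sub_mono T hT v hj hy, rfl⟩

lemma mem_sub_ne_v {x y : V} (hx : x ≠ v) (hy : y ∈ sub T hT v x) : y ≠ v := by
  intro h
  rw [h] at hy
  exact v_not_mem_sub T hT v hx hy

lemma subE_pend_ne {x j y : V} (hx : x ≠ v) (hj : j ∈ children T hT v x)
    (hy : y ∈ sub T hT v j) : s(y, par T hT v y) ≠ s(x, par T hT v x) := by
  rw [mem_children] at hj
  intro heq
  have hyv : y ≠ v := mem_sub_ne_v T hT v hj.1 hy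
  have : y = x := edge_rep_unique T hT v hyv hx heq
  subst this
  have h1 := sub_dist_ge T hT v hy
  have h2 := par_dist T hT v hj.1
  rw [hj.2] at h2
  omega

lemma subE_disj {x j j' : V} (hj : j ∈ children T hT v x) (hj' : j' ∈ children T hT v x)
    (hne : j ≠ j') {e : Sym2 V} (he : e ∈ subE T hT v j) : e ∉ subE T hT v j' := by
  rw [mem_children] at hj hj'
  obtain ⟨y, hy, rfl⟩ := he
  rintro ⟨y', hy', heq⟩
  have hyv : y ≠ v := mem_sub_ne_v T hT v hj.1 hy
  have hyv' : y' ≠ v := mem_sub_ne_v T hT v hj'.1 hy'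
  have : y' = y := edge_rep_unique T hT v hyv' hyv heq.symm
  subst this
  exact hne (sub_disjoint T hT v hj.2 hj'.2 hj.1 hj'.1 hy hy')

lemma shrub_step [DecidableRel T.Adj] (x : V) (hx : x ≠ v)
    (IH : ∀ j ∈ children T hT v x, ∃ d c, Good T hT v 1 j d c) :
    ∃ d c, Good T hT v 1 x d c := by
  classical
  set K := children T hT v x with hK
  have H : ∀ j : V, ∃ (d : ℕ) (cj : Sym2 V → ℕ), j ∈ K → Good T hT v 1 j d cj := by
    intro j
    by_cases hj : j ∈ K
    · obtain ⟨d, cj, hg⟩ := IH j hj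
      exact ⟨d, cj, fun _ => hg⟩
    · exact ⟨0, fun _ => 0, fun h => absurd h hj⟩
  choose dd cc hcc using H
  obtain ⟨B, hBK, hB1, hB2⟩ := counting_core K dd 1 (by norm_num) (Or.inl rfl)
  set t := B.card with ht
  set k := K.card with hk
  have htk : t ≤ k := Finset.card_le_card hBK
  set F : V → Sym2 V → ℕ := fun j => if j ∈ B then sw (cc j) else cc j with hF
  set ci : V → ℕ := fun j => if j ∈ B then 0 else 1 with hci
  have hgood : ∀ j ∈ K, Good T hT v (ci j) j (dd j) (F j) := by
    intro j hj
    by_cases hjB : j ∈ B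
    · simp only [hF, hci, if_pos hjB]
      exact (hcc j hj).swap
    · simp only [hF, hci, if_neg hjB]
      exact hcc j hj
  have hKch : ∀ j ∈ K, j ∈ children T hT v x := fun j hj => hj
  have hjv : ∀ j ∈ K, j ≠ v := fun j hj => ((mem_children T hT v).mp (hKch j hj)).1
  have hjp : ∀ j ∈ K, par T hT v j = x := fun j hj => ((mem_children T hT v).mp (hKch j hj)).2
  set pend := s(x, par T hT v x) with hpend
  set c : Sym2 V → ℕ := fun e => if e = pend then 1 else 2 - K.sup (fun j => 2 - F j e) with hc
  have hF2' : ∀ j ∈ K, ∀ e, F j e ≤ 2 := by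
    intro j hj e
    by_cases he : e ∈ subE T hT v j
    · have := (hgood j hj).1 e he
      omega
    · have := (hgood j hj).2.1 e he
      omega
  have hpend_not : ∀ j ∈ K, pend ∉ subE T hT v j := by
    rintro j hj ⟨y, hy, heq⟩
    exact subE_pend_ne T hT v hx (hKch j hj) hy heq.symm
  have hceq : ∀ j ∈ K, ∀ e ∈ subE T hT v j, c e = F j e := by
    intro j hj e he
    have hne : e ≠ pend := fun h => hpend_not j hj (h ▸ he)
    have hsup : K.sup (fun j' => 2 - F j' e) = 2 - F j e := by
      apply Nat.le_antisymm
      · apply Finset.sup_le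
        intro j' hj'
        rcases eq_or_ne j' j with rfl | hne'
        · exact le_refl _
        · have := (hgood j' hj').2.1 e (subE_disj T hT v (hKch j hj) (hKch j' hj') hne'.symm he)
          omega
      · exact Finset.le_sup (f := fun j' => 2 - F j' e) hj
    have hle2 := hF2' j hj e
    simp only [hc, if_neg hne, hsup]
    omega
  have hc2 : ∀ e, e ∉ subE T hT v x → c e = 2 := by
    intro e he
    have hne : e ≠ pend := by
      intro h
      exact he (h ▸ ⟨x, mem_sub_self T hT v x, rfl⟩)
    have hsup : K.sup (fun j' => 2 - F j' e) = 0 := by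
      apply Nat.le_antisymm _ (Nat.zero_le _)
      apply Finset.sup_le
      intro j' hj'
      have hout : e ∉ subE T hT v j' := fun h => he (subE_subset T hT v (hKch j' hj') h)
      have := (hgood j' hj').2.1 e hout
      omega
    simp only [hc, if_neg hne, hsup]
  have hc1 : ∀ e ∈ subE T hT v x, c e ≤ 1 := by
    rintro e ⟨y, hy, rfl⟩
    rcases eq_or_ne y x with rfl | hyx
    · simp only [hc, hpend, if_pos rfl]
      omega
    · obtain ⟨j, hjv', hjp', hyj⟩ := sub_step T hT v hy hyx
      have hjK : j ∈ K := (mem_children T hT v).mpr ⟨hjv', hjp'⟩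
      rw [hceq j hjK _ ⟨y, hyj, rfl⟩]
      exact (hgood j hjK).1 _ ⟨y, hyj, rfl⟩
  have hcpend : c pend = 1 := by simp only [hc, if_pos rfl]
  have hcj : ∀ j ∈ K, c s(x, j) = ci j := by
    intro j hj
    have hsxj : s(x, j) = s(j, par T hT v j) := by
      rw [hjp j hj, Sym2.eq_swap]
    rw [hsxj, hceq j hj _ ⟨j, mem_sub_self T hT v j, rfl⟩]
    exact (hgood j hj).2.2.1
  -- degree computation at x
  have hfiltered : ∀ i : ℕ, (K.filter (fun j => c s(x,j) = i)).card
      = (K.filter (fun j => ci j = i)).card := by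
    intro i
    congr 1
    apply Finset.filter_congr
    intro j hj
    rw [hcj j hj]
  have hdeg1 : colorDeg T c 1 x = 1 + (k - t) := by
    rw [colorDeg_eq_card T c 1 x, neighborFinset_eq T hT v hx, Finset.filter_insert]
    rw [if_pos hcpend]
    rw [Finset.card_insert_of_notMem (fun h => par_not_mem_children T hT v hx
      (Finset.mem_of_mem_filter _ h))]
    rw [hfiltered 1]
    have : K.filter (fun j => ci j = 1) = K \ B := by
      ext j
      simp only [Finset.mem_filter, Finset.mem_sdiff, hci]
      constructor
      · rintro ⟨hj, hcij⟩
        refine ⟨hj, fun hB => by simp [if_pos hB] at hcij⟩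
      · rintro ⟨hj, hB⟩
        exact ⟨hj, by simp [if_neg hB]⟩
    rw [this, Finset.card_sdiff_of_subset hBK]
    omega
  have hdeg0 : colorDeg T c 0 x = t := by
    rw [colorDeg_eq_card T c 0 x, neighborFinset_eq T hT v hx, Finset.filter_insert]
    rw [if_neg (by rw [hcpend]; omega)]
    rw [hfiltered 0]
    have : K.filter (fun j => ci j = 0) = B := by
      ext j
      simp only [Finset.mem_filter, hci]
      constructor
      · rintro ⟨hj, hcij⟩
        by_cases hB : j ∈ B
        · exact hB
        · simp [if_neg hB] at hcij
      · intro hB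
        exact ⟨hBK hB, by simp [if_pos hB]⟩
    rw [this]
  -- transport of colorDeg into child subtrees
  have htrans : ∀ j ∈ K, ∀ y ∈ sub T hT v j, ∀ i,
      colorDeg T c i y = colorDeg T (F j) i y := by
    intro j hj y hy i
    apply colorDeg_congr
    intro z hz
    exact hceq j hj _ (incident_mem_subE T hT v (hjv j hj) hy hz)
  -- the main local irregularity condition
  have hLI : ∀ y z, T.Adj y z → c s(y,z) ≤ 1 → s(y,z) ≠ pend →
      colorDeg T c (c s(y,z)) y ≠ colorDeg T c (c s(y,z)) z := by
    intro y z hadj hcle hnep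
    have hesub : s(y,z) ∈ subE T hT v x := by
      by_contra hcon
      rw [hc2 _ hcon] at hcle
      omega
    obtain ⟨w, hw, heq⟩ := hesub
    have hwx : w ≠ x := by
      rintro rfl
      exact hnep heq
    obtain ⟨j, hjv', hjp', hwj⟩ := sub_step T hT v hw hwx
    have hjK : j ∈ K := (mem_children T hT v).mpr ⟨hjv', hjp'⟩
    have hwv : w ≠ v := mem_sub_ne_v T hT v hjv' hwj
    have hesubj : s(w, par T hT v w) ∈ subE T hT v j := ⟨w, hwj, rfl⟩
    have hval : c s(w, par T hT v w) = F j s(w, par T hT v w) := hceq j hjK _ hesubj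
    have MAIN : colorDeg T c (c s(w, par T hT v w)) w
        ≠ colorDeg T c (c s(w, par T hT v w)) (par T hT v w) := by
      rcases eq_or_ne w j with rfl | hwj'
      · -- the edge from child w to x
        have hpwx : par T hT v w = x := hjp'
        have hFp : F w s(w, par T hT v w) = ci w := (hgood w hjK).2.2.1
        have hv1 : c s(w, par T hT v w) = ci w := by rw [hval, hFp]
        rw [hv1, hpwx]
        have hdw : colorDeg T c (ci w) w = dd w := by
          rw [htrans w hjK w (mem_sub_self T hT v w)]
          exact (hgood w hjK).2.2.2.1
        rw [hdw]
        by_cases hB : w ∈ B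
        · have : ci w = 0 := by simp [hci, if_pos hB]
          rw [this, hdeg0]
          exact hB1 w hB
        · have : ci w = 1 := by simp [hci, if_neg hB]
          rw [this, hdeg1]
          have := hB2 w (Finset.mem_sdiff.mpr ⟨hjK, hB⟩)
          omega
      · -- an edge internal to the subtree of j
        have hadjw : T.Adj w (par T hT v w) := par_adj T hT v hwv
        have hFle : F j s(w, par T hT v w) ≤ 1 := (hgood j hjK).1 _ hesubj
        have hnej : s(w, par T hT v w) ≠ s(j, par T hT v j) := by
          intro h
          exact hwj' (edge_rep_unique T hT v hwv (hjv j hjK) h)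
        have hchild := (hgood j hjK).2.2.2.2 w (par T hT v w) hadjw hFle hnej
        have hpw : par T hT v w ∈ sub T hT v j := parent_mem_sub T hT v hwj hwj' hwv
        rw [hval, htrans j hjK w hwj, htrans j hjK _ hpw]
        exact hchild
    rw [Sym2.eq_iff] at heq
    rcases heq with ⟨rfl, rfl⟩ | ⟨h1, h2⟩
    · exact MAIN
    · subst h1
      subst h2
      rw [Sym2.eq_swap]
      exact MAIN.symm
  exact ⟨1 + (k - t), c, hc1, hc2, hcpend, hdeg1, hLI⟩

lemma dist_lt_card (x : V) : T.dist x v < Fintype.card V := by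
  obtain ⟨p, hp, hpl⟩ := exists_shortest_path T hT v x
  rw [← hpl]
  exact hp.length_lt

lemma shrub_all [DecidableRel T.Adj] :
    ∀ (n : ℕ) (x : V), x ≠ v → Fintype.card V - T.dist x v ≤ n →
      ∃ d c, Good T hT v 1 x d c := by
  intro n
  induction n with
  | zero =>
    intro x hx h
    have := dist_lt_card T hT v x
    omega
  | succ N ih =>
    intro x hx h
    apply shrub_step T hT v x hx
    intro j hj
    rw [mem_children] at hj
    have hd : T.dist j v = T.dist x v + 1 := by
      have := par_dist T hT v hj.1
      rw [hj.2] at this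
      omega
    exact ih j hj.1 (by have := dist_lt_card T hT v x; omega)

lemma mem_sub_root (w : V) : w ∈ sub T hT v v := by
  have H : ∀ (n : ℕ) (w : V), T.dist w v ≤ n → w ∈ sub T hT v v := by
    intro n
    induction n with
    | zero =>
      intro w hw
      have hwv : w = v := hT.isConnected.dist_eq_zero_iff.mp (by omega)
      rw [hwv]
      exact mem_sub_self T hT v v
    | succ N ih =>
      intro w hw
      by_cases hwv : w = v
      · rw [hwv]; exact mem_sub_self T hT v v
      · have hd := par_dist T hT v hwv
        have := ih (par T hT v w) (by omega)
        exact sub_child T hT v this hwv rfl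
  exact H _ w le_rfl

lemma root_step [DecidableRel T.Adj] (hdeg5 : 5 ≤ T.degree v)
    (IH : ∀ j ∈ children T hT v v, ∃ d c, Good T hT v 1 j d c) :
    ∃ c, IsLIEC T 2 c := by
  classical
  set K := children T hT v v with hK
  have hkdeg : K.card = T.degree v := by
    rw [SimpleGraph.degree, neighborFinset_root_eq T hT v]
  have H : ∀ j : V, ∃ (d : ℕ) (cj : Sym2 V → ℕ), j ∈ K → Good T hT v 1 j d cj := by
    intro j
    by_cases hj : j ∈ K
    · obtain ⟨d, cj, hg⟩ := IH j hj
      exact ⟨d, cj, fun _ => hg⟩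
    · exact ⟨0, fun _ => 0, fun h => absurd h hj⟩
  choose dd cc hcc using H
  obtain ⟨B, hBK, hB1, hB2⟩ := counting_core K dd 0 (by norm_num) (Or.inr (by omega))
  set t := B.card with ht
  set k := K.card with hk
  have htk : t ≤ k := Finset.card_le_card hBK
  set F : V → Sym2 V → ℕ := fun j => if j ∈ B then sw (cc j) else cc j with hF
  set ci : V → ℕ := fun j => if j ∈ B then 0 else 1 with hci
  have hgood : ∀ j ∈ K, Good T hT v (ci j) j (dd j) (F j) := by
    intro j hj
    by_cases hjB : j ∈ B
    · simp only [hF, hci, if_pos hjB]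
      exact (hcc j hj).swap
    · simp only [hF, hci, if_neg hjB]
      exact hcc j hj
  have hKch : ∀ j ∈ K, j ∈ children T hT v v := fun j hj => hj
  have hjv : ∀ j ∈ K, j ≠ v := fun j hj => ((mem_children T hT v).mp (hKch j hj)).1
  have hjp : ∀ j ∈ K, par T hT v j = v := fun j hj => ((mem_children T hT v).mp (hKch j hj)).2
  set c : Sym2 V → ℕ := fun e => 2 - K.sup (fun j => 2 - F j e) with hc
  have hF2' : ∀ j ∈ K, ∀ e, F j e ≤ 2 := by
    intro j hj e
    by_cases he : e ∈ subE T hT v j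
    · have := (hgood j hj).1 e he
      omega
    · have := (hgood j hj).2.1 e he
      omega
  have hceq : ∀ j ∈ K, ∀ e ∈ subE T hT v j, c e = F j e := by
    intro j hj e he
    have hsup : K.sup (fun j' => 2 - F j' e) = 2 - F j e := by
      apply Nat.le_antisymm
      · apply Finset.sup_le
        intro j' hj'
        rcases eq_or_ne j' j with rfl | hne'
        · exact le_refl _
        · have := (hgood j' hj').2.1 e (subE_disj T hT v (hKch j hj) (hKch j' hj') hne'.symm he)
          omega
      · exact Finset.le_sup (f := fun j' => 2 - F j' e) hj
    have hle2 := hF2' j hj e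
    simp only [hc, hsup]
    omega
  -- every vertex other than v lies in the subtree of some child
  have hcover : ∀ w : V, w ≠ v → ∃ j ∈ K, w ∈ sub T hT v j := by
    intro w hwv
    obtain ⟨j, hjv', hjp', hwj⟩ := sub_step T hT v (mem_sub_root T hT v w) hwv
    exact ⟨j, (mem_children T hT v).mpr ⟨hjv', hjp'⟩, hwj⟩
  -- every edge is colored
  have hedge : ∀ y z, T.Adj y z → ∃ j ∈ K, s(y,z) ∈ subE T hT v j := by
    intro y z hadj
    rcases edge_form T hT v hadj with ⟨hyv, hp⟩ | ⟨hzv, hp⟩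
    · obtain ⟨j, hjK, hyj⟩ := hcover y hyv
      exact ⟨j, hjK, by rw [← hp]; exact ⟨y, hyj, rfl⟩⟩
    · obtain ⟨j, hjK, hzj⟩ := hcover z hzv
      refine ⟨j, hjK, ?_⟩
      rw [Sym2.eq_swap]
      rw [← hp]
      exact ⟨z, hzj, rfl⟩
  have hcj : ∀ j ∈ K, c s(v, j) = ci j := by
    intro j hj
    have hsxj : s(v, j) = s(j, par T hT v j) := by
      rw [hjp j hj, Sym2.eq_swap]
    rw [hsxj, hceq j hj _ ⟨j, mem_sub_self T hT v j, rfl⟩]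
    exact (hgood j hj).2.2.1
  have hfiltered : ∀ i : ℕ, (K.filter (fun j => c s(v,j) = i)).card
      = (K.filter (fun j => ci j = i)).card := by
    intro i
    congr 1
    apply Finset.filter_congr
    intro j hj
    rw [hcj j hj]
  have hdeg1 : colorDeg T c 1 v = k - t := by
    rw [colorDeg_eq_card T c 1 v, neighborFinset_root_eq T hT v, hfiltered 1]
    have : K.filter (fun j => ci j = 1) = K \ B := by
      ext j
      simp only [Finset.mem_filter, Finset.mem_sdiff, hci]
      constructor
      · rintro ⟨hj, hcij⟩
        refine ⟨hj, fun hB => by simp [if_pos hB] at hcij⟩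
      · rintro ⟨hj, hB⟩
        exact ⟨hj, by simp [if_neg hB]⟩
    rw [this, Finset.card_sdiff_of_subset hBK]
  have hdeg0 : colorDeg T c 0 v = t := by
    rw [colorDeg_eq_card T c 0 v, neighborFinset_root_eq T hT v, hfiltered 0]
    have : K.filter (fun j => ci j = 0) = B := by
      ext j
      simp only [Finset.mem_filter, hci]
      constructor
      · rintro ⟨hj, hcij⟩
        by_cases hB : j ∈ B
        · exact hB
        · simp [if_neg hB] at hcij
      · intro hB
        exact ⟨hBK hB, by simp [if_pos hB]⟩
    rw [this]
  have htrans : ∀ j ∈ K, ∀ y ∈ sub T hT v j, ∀ i,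
      colorDeg T c i y = colorDeg T (F j) i y := by
    intro j hj y hy i
    apply colorDeg_congr
    intro z hz
    exact hceq j hj _ (incident_mem_subE T hT v (hjv j hj) hy hz)
  refine ⟨c, ?_, ?_⟩
  · -- all edges get colors < 2
    intro e he
    induction e with
    | _ y z =>
      have hadj : T.Adj y z := he
      obtain ⟨j, hjK, hej⟩ := hedge y z hadj
      rw [hceq j hjK _ hej]
      have := (hgood j hjK).1 _ hej
      omega
  · -- local irregularity
    intro y z hadj
    have hMAIN : ∀ w : V, w ≠ v → ∀ j ∈ K, w ∈ sub T hT v j →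
        colorDeg T c (c s(w, par T hT v w)) w
          ≠ colorDeg T c (c s(w, par T hT v w)) (par T hT v w) := by
      intro w hwv j hjK hwj
      have hesubj : s(w, par T hT v w) ∈ subE T hT v j := ⟨w, hwj, rfl⟩
      have hval : c s(w, par T hT v w) = F j s(w, par T hT v w) := hceq j hjK _ hesubj
      rcases eq_or_ne w j with rfl | hwj'
      · have hpwx : par T hT v w = v := hjp w hjK
        have hFp : F w s(w, par T hT v w) = ci w := (hgood w hjK).2.2.1
        have hv1 : c s(w, par T hT v w) = ci w := by rw [hval, hFp]
        rw [hv1, hpwx]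
        have hdw : colorDeg T c (ci w) w = dd w := by
          rw [htrans w hjK w (mem_sub_self T hT v w)]
          exact (hgood w hjK).2.2.2.1
        rw [hdw]
        by_cases hB : w ∈ B
        · have : ci w = 0 := by simp [hci, if_pos hB]
          rw [this, hdeg0]
          exact hB1 w hB
        · have : ci w = 1 := by simp [hci, if_neg hB]
          rw [this, hdeg1]
          have := hB2 w (Finset.mem_sdiff.mpr ⟨hjK, hB⟩)
          omega
      · have hadjw : T.Adj w (par T hT v w) := par_adj T hT v hwv
        have hFle : F j s(w, par T hT v w) ≤ 1 := (hgood j hjK).1 _ hesubj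
        have hnej : s(w, par T hT v w) ≠ s(j, par T hT v j) := by
          intro h
          exact hwj' (edge_rep_unique T hT v hwv (hjv j hjK) h)
        have hchild := (hgood j hjK).2.2.2.2 w (par T hT v w) hadjw hFle hnej
        have hpw : par T hT v w ∈ sub T hT v j := parent_mem_sub T hT v hwj hwj' hwv
        rw [hval, htrans j hjK w hwj, htrans j hjK _ hpw]
        exact hchild
    rcases edge_form T hT v hadj with ⟨hyv, hp⟩ | ⟨hzv, hp⟩
    · obtain ⟨j, hjK, hyj⟩ := hcover y hyv
      have := hMAIN y hyv j hjK hyj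
      rw [hp] at this
      exact this
    · obtain ⟨j, hjK, hzj⟩ := hcover z hzv
      have := hMAIN z hzv j hjK hzj
      rw [hp] at this
      rw [show (s(y,z) : Sym2 V) = s(z,y) from Sym2.eq_swap]
      exact this.symm

end Ground

theorem tree_maxDegree_ge_five_two_colors
    [Fintype V] (T : SimpleGraph V) [DecidableRel T.Adj]
    (hT : T.IsTree) (hdeg : 5 ≤ T.maxDegree) :
    (∃ c, IsLIEC T 2 c) ∧ irrChromIndex T ≤ 2 := by
  classical
  haveI : Nonempty V := hT.isConnected.nonempty
  obtain ⟨v, hv⟩ := T.exists_maximal_degree_vertex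
  have hdeg5 : 5 ≤ T.degree v := hv ▸ hdeg
  have hex : ∃ c, IsLIEC T 2 c := by
    apply root_step T hT v hdeg5
    intro j hj
    exact shrub_all T hT v (Fintype.card V) j ((mem_children T hT v).mp hj).1 (by omega)
  exact ⟨hex, Nat.sInf_le hex⟩
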